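/- Let F : ℝ^d_≥ → ℝ^d be Lipschitz continuous with constant ‖F‖_Lip and C¹ point-symmetric at a point α ∈ ℝ^d_≥. Then for every pair of indices m, n one has |[F,α](m,n)| ≤ ‖F‖_Lip. -/

import Mathlib

open Matrix

/-- The Euclidean norm of a vector in `ℝ^d`. -/
noncomputable def euclidEnorm {d : ℕ} (x : Fin d → ℝ) : ℝ :=
  Real.sqrt (∑ i, (x i) ^ 2)

/-- The matrix `[F,α]` of generalized divided differences, where `D` is the
derivative of the extension `F^ext` at `α`, so that
`D (Pi.single n 1) m = ∂ₙ F^ext_m (α)`. -/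
noncomputable def bracket {d : ℕ} (F : (Fin d → ℝ) → Fin d → ℝ)
    (D : (Fin d → ℝ) →L[ℝ] (Fin d → ℝ)) (α : Fin d → ℝ) (m n : Fin d) : ℝ :=
  if α m = α n then
    if m = n then D (Pi.single m 1) m
    else D (Pi.single m 1) m - D (Pi.single m 1) n
  else (F α m - F α n) / (α m - α n)

lemma abs_le_enorm {d : ℕ} (x : Fin d → ℝ) (i : Fin d) : |x i| ≤ euclidEnorm x := by
  have h : (x i) ^ 2 ≤ ∑ j, (x j) ^ 2 :=
    Finset.single_le_sum (f := fun j => (x j)^2) (fun j _ => sq_nonneg _) (Finset.mem_univ i)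
  calc |x i| = Real.sqrt ((x i)^2) := (Real.sqrt_sq_eq_abs _).symm
    _ ≤ euclidEnorm x := Real.sqrt_le_sqrt h

lemma sq_add_sq_le_enorm {d : ℕ} (x : Fin d → ℝ) {i j : Fin d} (hij : i ≠ j) :
    (x i)^2 + (x j)^2 ≤ ∑ k, (x k) ^ 2 := by
  classical
  have : ({i, j} : Finset (Fin d)).sum (fun k => (x k)^2) ≤ ∑ k, (x k)^2 :=
    Finset.sum_le_sum_of_subset_of_nonneg (Finset.subset_univ _) (fun k _ _ => sq_nonneg _)
  rwa [Finset.sum_pair hij] at this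

lemma abs_sub_le_enorm {d : ℕ} (x : Fin d → ℝ) {i j : Fin d} (hij : i ≠ j) :
    |x i - x j| ≤ Real.sqrt 2 * euclidEnorm x := by
  have h2 : (x i - x j)^2 ≤ 2 * ∑ k, (x k)^2 := by
    have := sq_add_sq_le_enorm x hij; nlinarith [sq_nonneg (x i + x j)]
  calc |x i - x j| = Real.sqrt ((x i - x j)^2) := (Real.sqrt_sq_eq_abs _).symm
    _ ≤ Real.sqrt (2 * ∑ k, (x k)^2) := Real.sqrt_le_sqrt h2
    _ = Real.sqrt 2 * euclidEnorm x := by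
        rw [Real.sqrt_mul (by norm_num)]; rfl

lemma euclidEnorm_smul {d : ℕ} (t : ℝ) (x : Fin d → ℝ) : euclidEnorm (t • x) = |t| * euclidEnorm x := by
  unfold euclidEnorm
  have : ∑ i, ((t • x) i)^2 = t^2 * ∑ i, (x i)^2 := by
    rw [Finset.mul_sum]; congr 1; ext i; simp [mul_pow]
  rw [this, Real.sqrt_mul (sq_nonneg _), Real.sqrt_sq_eq_abs]

lemma continuous_euclidEnorm {d : ℕ} : Continuous (euclidEnorm (d := d)) := by
  apply Real.continuous_sqrt.comp
  exact continuous_finset_sum _ fun i _ => ((continuous_apply i).pow 2)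

lemma sum_pair_support {d : ℕ} (f : Fin d → ℝ) {i j : Fin d} (hij : i ≠ j)
    (h0 : ∀ k, k ≠ i → k ≠ j → f k = 0) : ∑ k, f k = f i + f j := by
  classical
  rw [← Finset.sum_pair hij]
  exact (Finset.sum_subset (Finset.subset_univ _)
    (fun k _ hk => by
      simp only [Finset.mem_insert, Finset.mem_singleton] at hk
      push_neg at hk
      exact h0 k hk.1 hk.2)).symm

lemma sum_single_support {d : ℕ} (f : Fin d → ℝ) (i : Fin d)
    (h0 : ∀ k, k ≠ i → f k = 0) : ∑ k, f k = f i :=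
  Finset.sum_eq_single_of_mem i (Finset.mem_univ i) (fun b _ hb => h0 b hb)

/-- antitone from adjacent comparisons -/
lemma antitone_of_succ {d : ℕ} (w : Fin d → ℝ)
    (h : ∀ (k : ℕ) (hk : k + 1 < d), w ⟨k+1, hk⟩ ≤ w ⟨k, Nat.lt_of_succ_lt hk⟩) :
    Antitone w := by
  have key : ∀ (j : ℕ) (hj : j < d) (i : ℕ) (hi : i < d), i ≤ j →
      w ⟨j, hj⟩ ≤ w ⟨i, hi⟩ := by
    intro j
    induction j with
    | zero => intro hj i hi hij; interval_cases i; exact le_refl _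
    | succ n ih =>
      intro hj i hi hij
      rcases Nat.eq_or_lt_of_le hij with h1 | h1
      · subst h1; exact le_refl _
      · have hn : n < d := Nat.lt_of_succ_lt hj
        exact le_trans (h n hj) (ih hn i hi (Nat.lt_succ_iff.mp h1))
  intro a b hab
  exact key b b.isLt a a.isLt hab

/-- uniqueness of the sorted rearrangement -/
lemma sorted_unique {d : ℕ} (x : Fin d → ℝ) (σ : Equiv.Perm (Fin d))
    (hx : Antitone x) (hxσ : Antitone (x ∘ σ)) : x ∘ σ = x := by
  set g : Fin d → ℝ := fun i => -(x i) with hg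
  have hgm : Monotone g := fun a b hab => neg_le_neg (hx hab)
  have hgσ : Monotone (g ∘ σ) := fun a b hab => neg_le_neg (hxσ hab)
  have h1 : (g ∘ σ) ∘ Tuple.sort (g ∘ σ) = g ∘ Tuple.sort g :=
    Tuple.comp_perm_comp_sort_eq_comp_sort
  rw [Tuple.sort_eq_refl_iff_monotone.mpr hgσ, Tuple.sort_eq_refl_iff_monotone.mpr hgm] at h1
  simp only [Equiv.coe_refl, Function.comp_id] at h1
  funext i
  have := congrFun h1 i
  simp only [hg, Function.comp_apply, neg_inj] at this
  exact this

/-- directional Lipschitz bound on the derivative -/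
lemma deriv_bound {d : ℕ} (Fext F : (Fin d → ℝ) → Fin d → ℝ) (α : Fin d → ℝ)
    (D : (Fin d → ℝ) →L[ℝ] (Fin d → ℝ)) (K : ℝ)
    (hα : Antitone α)
    (hLip : ∀ x y : Fin d → ℝ, Antitone x → Antitone y →
      euclidEnorm (F x - F y) ≤ K * euclidEnorm (x - y))
    (hFeq : ∀ β : Fin d → ℝ, Antitone β → Fext β = F β)
    (hD : HasFDerivAt Fext D α)
    (v : Fin d → ℝ) (t₀ : ℝ) (ht₀ : 0 < t₀)
    (hv : ∀ t : ℝ, 0 < t → t < t₀ → Antitone (α + t • v)) :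
    euclidEnorm (D v) ≤ K * euclidEnorm v := by
  have hcurve : HasDerivAt (fun t : ℝ => α + t • v) v 0 := by
    have h1 : HasDerivAt (fun t : ℝ => t • v) ((1:ℝ) • v) 0 :=
      (hasDerivAt_id 0).smul_const v
    simpa using h1.const_add α
  have hφ : HasDerivAt (fun t : ℝ => Fext (α + t • v)) (D v) 0 := by
    have h0 : HasFDerivAt Fext D (α + (0:ℝ) • v) := by simpa using hD
    exact h0.comp_hasDerivAt 0 hcurve
  have hslope := hasDerivAt_iff_tendsto_slope.mp hφ
  have hslope' : Filter.Tendsto (slope (fun t : ℝ => Fext (α + t • v)) 0)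
      (nhdsWithin 0 (Set.Ioi 0)) (nhds (D v)) :=
    hslope.mono_left (nhdsWithin_mono 0 (fun t ht => ne_of_gt ht))
  have htend : Filter.Tendsto
      (fun t => euclidEnorm (slope (fun s : ℝ => Fext (α + s • v)) 0 t))
      (nhdsWithin 0 (Set.Ioi 0)) (nhds (euclidEnorm (D v))) :=
    (continuous_euclidEnorm.tendsto _).comp hslope'
  refine le_of_tendsto htend ?_
  have hmem : Set.Ioo (0:ℝ) t₀ ∈ nhdsWithin (0:ℝ) (Set.Ioi 0) :=
    Ioo_mem_nhdsGT_of_mem (by constructor <;> simp [ht₀, le_refl])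
  filter_upwards [hmem] with t ht
  obtain ⟨ht1, ht2⟩ := ht
  have hanti := hv t ht1 ht2
  have hslope_eq : slope (fun s : ℝ => Fext (α + s • v)) 0 t
      = t⁻¹ • (F (α + t • v) - F α) := by
    rw [slope_def_module, hFeq _ hanti]
    have h00 : α + (0:ℝ) • v = α := by simp
    rw [h00, hFeq _ hα]
    simp
  rw [hslope_eq, euclidEnorm_smul]
  have hle : euclidEnorm (F (α + t • v) - F α) ≤ K * (t * euclidEnorm v) := by
    have h := hLip (α + t • v) α hanti hα
    have : (α + t • v) - α = t • v := by abel
    rw [this, euclidEnorm_smul, abs_of_pos ht1] at h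
    linarith [h]
  calc |t⁻¹| * euclidEnorm (F (α + t • v) - F α) ≤ |t⁻¹| * (K * (t * euclidEnorm v)) := by
        exact mul_le_mul_of_nonneg_left hle (abs_nonneg _)
    _ = K * euclidEnorm v := by
        rw [abs_of_pos (inv_pos.mpr ht1)]; field_simp

/-- equivariance of the derivative under permutations fixing α -/
lemma deriv_perm {d : ℕ} (Fext : (Fin d → ℝ) → Fin d → ℝ) (α : Fin d → ℝ)
    (D : (Fin d → ℝ) →L[ℝ] (Fin d → ℝ))
    (hsym : ∀ (x : Fin d → ℝ) (σ : Equiv.Perm (Fin d)), Fext (x ∘ σ) = Fext x ∘ σ)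
    (hD : HasFDerivAt Fext D α)
    (σ : Equiv.Perm (Fin d)) (hσ : α ∘ ⇑σ = α) (v : Fin d → ℝ) :
    D (v ∘ ⇑σ) = (D v) ∘ ⇑σ := by
  set Pσ : (Fin d → ℝ) →L[ℝ] (Fin d → ℝ) :=
    LinearMap.toContinuousLinearMap (LinearMap.funLeft ℝ ℝ ⇑σ) with hPσ
  have hPapp : ∀ x : Fin d → ℝ, Pσ x = x ∘ ⇑σ := fun x => rfl
  have h1 : HasFDerivAt (fun x => Fext (Pσ x)) (D.comp Pσ) α := by
    have hD' : HasFDerivAt Fext D (Pσ α) := by rw [hPapp, hσ]; exact hD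
    exact hD'.comp α Pσ.hasFDerivAt
  have h2 : HasFDerivAt (fun x => Pσ (Fext x)) (Pσ.comp D) α :=
    Pσ.hasFDerivAt.comp α hD
  have hfun : (fun x => Fext (Pσ x)) = (fun x => Pσ (Fext x)) := by
    funext x
    rw [hPapp, hPapp, hsym]
  rw [hfun] at h1
  have huniq : D.comp Pσ = Pσ.comp D := h1.unique h2
  have := DFunLike.congr_fun huniq v
  simpa [hPapp] using this
theorem bracket_le_lipschitz {d : ℕ}
    (F Fext : (Fin d → ℝ) → Fin d → ℝ) (α : Fin d → ℝ)
    (D : (Fin d → ℝ) →L[ℝ] (Fin d → ℝ)) (K : ℝ) (hK : 0 ≤ K)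
    (hα : Antitone α)
    -- `F` is Lipschitz with constant `K` on `ℝ^d_≥`, w.r.t. the Euclidean norm:
    (hLip : ∀ x y : Fin d → ℝ, Antitone x → Antitone y →
      euclidEnorm (F x - F y) ≤ K * euclidEnorm (x - y))
    -- `Fext` is the extension `F^ext` of `F`, obtained by sorting the argument:
    (hFext : ∀ x : Fin d → ℝ, ∃ σ : Equiv.Perm (Fin d),
      Antitone (x ∘ σ) ∧ Fext x = F (x ∘ σ) ∘ σ.symm)
    -- `F` is C¹ point-symmetric at `α`:
    (hsym : ∀ (x : Fin d → ℝ) (σ : Equiv.Perm (Fin d)), Fext (x ∘ σ) = Fext x ∘ σ)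
    (hC1 : ContDiffAt ℝ 1 Fext α)
    (hD : HasFDerivAt Fext D α) :
    ∀ m n : Fin d, |bracket F D α m n| ≤ K := by
  classical
  -- Step A : `Fext = F` on antitone vectors
  have hFeq : ∀ β : Fin d → ℝ, Antitone β → Fext β = F β := by
    intro β hβ
    obtain ⟨σ, hσ1, hσ2⟩ := hFext β
    have hβσ : β ∘ ⇑σ = β := sorted_unique β σ hβ hσ1
    have h3 := hsym β σ
    rw [hβσ] at h3 hσ2
    funext i
    have e1 : Fext β i = Fext β (σ i) := congrFun h3 i
    have e2 : Fext β (σ i) = F β i := by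
      have := congrFun hσ2 (σ i)
      simpa using this
    rw [e1, e2]
  -- Step B : block constancy of `F` at antitone points
  have hblock : ∀ β : Fin d → ℝ, Antitone β → ∀ i j : Fin d, β i = β j → F β i = F β j := by
    intro β hβ i j hij
    have hβτ : β ∘ ⇑(Equiv.swap i j) = β := by
      funext k
      simp only [Function.comp_apply]
      rcases eq_or_ne k i with rfl | hki
      · rw [Equiv.swap_apply_left]; exact hij.symm
      rcases eq_or_ne k j with rfl | hkj
      · rw [Equiv.swap_apply_right]; exact hij
      · rw [Equiv.swap_apply_of_ne_of_ne hki hkj]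
    have h3 := hsym β (Equiv.swap i j)
    rw [hβτ, hFeq β hβ] at h3
    have h4 := congrFun h3 i
    rw [Function.comp_apply, Equiv.swap_apply_left] at h4
    exact h4
  -- Step C : adjacent finite-difference bound
  have hadj : ∀ (k : ℕ) (hk : k + 1 < d),
      |F α ⟨k, Nat.lt_of_succ_lt hk⟩ - F α ⟨k+1, hk⟩|
        ≤ K * (α ⟨k, Nat.lt_of_succ_lt hk⟩ - α ⟨k+1, hk⟩) := by
    intro k hk
    set i : Fin d := ⟨k, Nat.lt_of_succ_lt hk⟩ with hidef
    set j : Fin d := ⟨k+1, hk⟩ with hjdef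
    have hij : i ≠ j := by simp [hidef, hjdef, Fin.ext_iff]
    have hijle : i ≤ j := by simp [hidef, hjdef, Fin.le_def]
    have hge : α j ≤ α i := hα hijle
    set s : ℝ := (α i + α j) / 2 with hs
    set z : Fin d → ℝ := fun l => if (l:ℕ) = k ∨ (l:ℕ) = k+1 then s else α l with hz
    have hzi : z i = s := by simp [hz, hidef]
    have hzj : z j = s := by simp [hz, hjdef]
    have hsle : α j ≤ s := by rw [hs]; linarith
    have hsge : s ≤ α i := by rw [hs]; linarith
    have hzout : ∀ l : Fin d, (l:ℕ) ≠ k → (l:ℕ) ≠ k+1 → z l = α l := by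
      intro l h1 h2; simp [hz, h1, h2]
    have hzin : ∀ l : Fin d, ((l:ℕ) = k ∨ (l:ℕ) = k+1) → z l = s := by
      intro l h; simp only [hz]; rw [if_pos h]
    have hzanti : Antitone z := by
      apply antitone_of_succ
      intro l hl
      by_cases hb1 : l + 1 < k
      · rw [hzout _ (by simp; omega) (by simp; omega),
          hzout _ (by simp; omega) (by simp; omega)]
        exact hα (by simp [Fin.mk_le_mk])
      by_cases hb2 : l + 1 = k
      · rw [hzout ⟨l, Nat.lt_of_succ_lt hl⟩ (by simp; omega) (by simp; omega),
          hzin ⟨l+1, hl⟩ (by simp; omega)]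
        have hai : (⟨l, Nat.lt_of_succ_lt hl⟩ : Fin d) ≤ i := by
          simp [hidef, Fin.le_def]; omega
        exact le_trans hsge (hα hai)
      by_cases hb3 : l = k
      · rw [hzin ⟨l, Nat.lt_of_succ_lt hl⟩ (by simp; omega),
          hzin ⟨l+1, hl⟩ (by simp; omega)]
      by_cases hb4 : l = k + 1
      · rw [hzin ⟨l, Nat.lt_of_succ_lt hl⟩ (by simp; omega),
          hzout ⟨l+1, hl⟩ (by simp; omega) (by simp; omega)]
        have hjb : j ≤ (⟨l+1, hl⟩ : Fin d) := by
          simp [hjdef, Fin.le_def]; omega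
        exact le_trans (hα hjb) hsle
      · rw [hzout _ (by simp; omega) (by simp; omega),
          hzout _ (by simp; omega) (by simp; omega)]
        exact hα (by simp [Fin.mk_le_mk])
    set δ : ℝ := α i - α j with hδ
    have hδ0 : 0 ≤ δ := by rw [hδ]; linarith
    have hdist : euclidEnorm (α - z) = Real.sqrt (δ^2 / 2) := by
      unfold euclidEnorm
      congr 1
      have hzero : ∀ l : Fin d, l ≠ i → l ≠ j → ((α - z) l)^2 = 0 := by
        intro l h1 h2
        have e1 : (l:ℕ) ≠ k := fun he => h1 (Fin.ext (by simp [hidef, he]))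
        have e2 : (l:ℕ) ≠ k+1 := fun he => h2 (Fin.ext (by simp [hjdef, he]))
        rw [Pi.sub_apply, hzout l e1 e2]
        ring
      rw [sum_pair_support _ hij hzero]
      rw [Pi.sub_apply, Pi.sub_apply, hzi, hzj, hs, hδ]
      ring
    have hFz : F z i = F z j := hblock z hzanti i j (by rw [hzi, hzj])
    have hkey : (F α - F z) i - (F α - F z) j = F α i - F α j := by
      simp only [Pi.sub_apply]; rw [hFz]; ring
    calc |F α i - F α j| = |(F α - F z) i - (F α - F z) j| := by rw [hkey]
      _ ≤ Real.sqrt 2 * euclidEnorm (F α - F z) := abs_sub_le_enorm _ hij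
      _ ≤ Real.sqrt 2 * (K * euclidEnorm (α - z)) :=
          mul_le_mul_of_nonneg_left (hLip α z hα hzanti) (Real.sqrt_nonneg 2)
      _ = K * (Real.sqrt 2 * euclidEnorm (α - z)) := by ring
      _ = K * δ := by
          rw [hdist, ← Real.sqrt_mul (by norm_num : (0:ℝ) ≤ 2)]
          have : 2 * (δ^2/2) = δ^2 := by ring
          rw [this, Real.sqrt_sq hδ0]
  -- Step D : telescoped finite-difference bound
  have htel : ∀ (j : ℕ) (hj : j < d) (i : ℕ) (hi : i < d), i ≤ j →
      |F α ⟨i, hi⟩ - F α ⟨j, hj⟩| ≤ K * (α ⟨i, hi⟩ - α ⟨j, hj⟩) := by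
    intro j
    induction j with
    | zero =>
      intro hj i hi hij
      interval_cases i
      simp
    | succ p ih =>
      intro hj i hi hij
      rcases Nat.eq_or_lt_of_le hij with h1 | h1
      · subst h1; simp
      · have hp : p < d := Nat.lt_of_succ_lt hj
        have hip : i ≤ p := Nat.lt_succ_iff.mp h1
        have t1 := ih hp i hi hip
        have t2 := hadj p hj
        calc |F α ⟨i, hi⟩ - F α ⟨p+1, hj⟩|
            ≤ |F α ⟨i, hi⟩ - F α ⟨p, hp⟩| + |F α ⟨p, hp⟩ - F α ⟨p+1, hj⟩| := abs_sub_le _ _ _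
          _ ≤ K * (α ⟨i, hi⟩ - α ⟨p, hp⟩) + K * (α ⟨p, hp⟩ - α ⟨p+1, hj⟩) := add_le_add t1 t2
          _ = K * (α ⟨i, hi⟩ - α ⟨p+1, hj⟩) := by ring
  have habs : ∀ i j : Fin d, |F α i - F α j| ≤ K * |α i - α j| := by
    intro i j
    rcases le_total i j with h | h
    · have := htel j j.isLt i i.isLt h
      rw [abs_of_nonneg (sub_nonneg.mpr (hα h))]
      simpa using this
    · have := htel i i.isLt j j.isLt h
      rw [abs_sub_comm (F α i), abs_sub_comm (α i)]
      rw [abs_of_nonneg (sub_nonneg.mpr (hα h))]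
      simpa using this
  -- main case split
  intro m n
  by_cases hmn : α m = α n
  · -- derivative cases
    set B : Finset (Fin d) := Finset.univ.filter (fun k => α k = α m) with hB
    have hmB : m ∈ B := by simp [hB]
    have hnB : n ∈ B := by simp [hB, hmn.symm]
    have hBne : B.Nonempty := ⟨m, hmB⟩
    set m₀ := B.min' hBne with hm₀
    set n₀ := B.max' hBne with hn₀
    have hm₀B : m₀ ∈ B := B.min'_mem hBne
    have hn₀B : n₀ ∈ B := B.max'_mem hBne
    have hmemB : ∀ b : Fin d, b ∈ B → α b = α m := by
      intro b hb; simpa [hB] using hb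
    have hαm₀ : α m₀ = α m := hmemB _ hm₀B
    have hαn₀ : α n₀ = α m := hmemB _ hn₀B
    have hminle : ∀ b ∈ B, m₀ ≤ b := fun b hb => B.min'_le b hb
    have hmaxge : ∀ b ∈ B, b ≤ n₀ := fun b hb => B.le_max' b hb
    have hstrict_up : ∀ k : Fin d, k < m₀ → α m₀ < α k := by
      intro k hk
      rcases eq_or_lt_of_le (hα (le_of_lt hk)) with h2 | h2
      · exfalso
        have : k ∈ B := by
          rw [hB, Finset.mem_filter]
          exact ⟨Finset.mem_univ _, by rw [← h2, hαm₀]⟩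
        exact absurd (hminle k this) (not_le.mpr hk)
      · exact h2
    have hstrict_dn : ∀ k : Fin d, n₀ < k → α k < α n₀ := by
      intro k hk
      rcases eq_or_lt_of_le (hα (le_of_lt hk)) with h2 | h2
      · exfalso
        have : k ∈ B := by
          rw [hB, Finset.mem_filter]
          exact ⟨Finset.mem_univ _, by rw [h2, hαn₀]⟩
        exact absurd (hmaxge k this) (not_le.mpr hk)
      · exact h2
    have hswapfix : ∀ a b : Fin d, a ∈ B → b ∈ B → α ∘ ⇑(Equiv.swap a b) = α := by
      intro a b ha hb
      funext k
      simp only [Function.comp_apply]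
      rcases eq_or_ne k a with rfl | hka
      · rw [Equiv.swap_apply_left, hmemB b hb, hmemB k ha]
      rcases eq_or_ne k b with rfl | hkb
      · rw [Equiv.swap_apply_right, hmemB a ha, hmemB k hb]
      · rw [Equiv.swap_apply_of_ne_of_ne hka hkb]
    have hDs : ∀ (σ : Equiv.Perm (Fin d)), α ∘ ⇑σ = α →
        ∀ a j : Fin d, D (Pi.single a 1) j = D (Pi.single (σ a) 1) (σ j) := by
      intro σ hσ a j
      have h := deriv_perm Fext α D hsym hD σ hσ (Pi.single (σ a) 1)
      have hs : (Pi.single (σ a) 1 : Fin d → ℝ) ∘ ⇑σ = Pi.single a 1 := by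
        funext k
        simp only [Function.comp_apply, Pi.single_apply]
        simp [Equiv.apply_eq_iff_eq]
      rw [hs] at h
      exact congrFun h j
    by_cases hmm : m = n
    · -- diagonal case
      rw [bracket, if_pos hmn, if_pos hmm]
      have hred : D (Pi.single m₀ 1) m₀ = D (Pi.single m 1) m := by
        have h := hDs (Equiv.swap m₀ m) (hswapfix m₀ m hm₀B hmB) m₀ m₀
        rwa [Equiv.swap_apply_left] at h
      rw [← hred]
      set v : Fin d → ℝ := Pi.single m₀ 1 with hv
      have hve : ∀ l : Fin d, v l = if l = m₀ then 1 else 0 := by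
        intro l; rw [hv]; simp [Pi.single_apply]
      obtain ⟨t₀, ht₀, hvanti⟩ : ∃ t₀ : ℝ, 0 < t₀ ∧ ∀ t : ℝ, 0 < t → t < t₀ →
          Antitone (α + t • v) := by
        by_cases h0 : (m₀:ℕ) = 0
        · refine ⟨1, one_pos, fun t ht _ => ?_⟩
          apply antitone_of_succ
          intro l hl
          have hne1 : (⟨l+1, hl⟩ : Fin d) ≠ m₀ := by
            intro he
            have := congrArg Fin.val he
            simp only [Fin.val_mk] at this
            omega
          have hadj2 : α ⟨l+1, hl⟩ ≤ α ⟨l, Nat.lt_of_succ_lt hl⟩ :=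
            hα (by simp [Fin.mk_le_mk])
          simp only [Pi.add_apply, Pi.smul_apply, smul_eq_mul]
          rw [hve, hve, if_neg hne1]
          by_cases ha : (⟨l, Nat.lt_of_succ_lt hl⟩ : Fin d) = m₀
          · rw [if_pos ha]; nlinarith
          · rw [if_neg ha]; nlinarith
        · have hm₀pos : 0 < (m₀:ℕ) := Nat.pos_of_ne_zero h0
          set p : Fin d := ⟨(m₀:ℕ)-1, lt_of_le_of_lt (Nat.sub_le _ _) m₀.isLt⟩ with hp
          have hpm₀ : p < m₀ := by simp [hp, Fin.lt_def]; omega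
          have hgap : α m₀ < α p := hstrict_up p hpm₀
          refine ⟨α p - α m₀, by linarith, fun t ht ht' => ?_⟩
          apply antitone_of_succ
          intro l hl
          have hadj2 : α ⟨l+1, hl⟩ ≤ α ⟨l, Nat.lt_of_succ_lt hl⟩ :=
            hα (by simp [Fin.mk_le_mk])
          simp only [Pi.add_apply, Pi.smul_apply, smul_eq_mul]
          rw [hve, hve]
          by_cases hb : (⟨l+1, hl⟩ : Fin d) = m₀
          · have hlval := congrArg Fin.val hb
            simp only [Fin.val_mk] at hlval
            have hlp : (⟨l, Nat.lt_of_succ_lt hl⟩ : Fin d) = p := by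
              simp only [hp, Fin.ext_iff, Fin.val_mk]
              omega
            have hla : (⟨l, Nat.lt_of_succ_lt hl⟩ : Fin d) ≠ m₀ := by
              rw [hlp]; exact ne_of_lt hpm₀
            rw [if_pos hb, if_neg hla, hb, hlp]
            linarith
          · rw [if_neg hb]
            by_cases ha : (⟨l, Nat.lt_of_succ_lt hl⟩ : Fin d) = m₀
            · rw [if_pos ha]; nlinarith
            · rw [if_neg ha]; nlinarith
      have hb := deriv_bound Fext F α D K hα hLip hFeq hD v t₀ ht₀ hvanti
      have he1 : euclidEnorm v = 1 := by
        unfold euclidEnorm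
        have : ∑ l, (v l)^2 = 1 := by
          rw [sum_single_support (fun l => (v l)^2) m₀
            (fun l hl => by show v l ^ 2 = 0; rw [hve l, if_neg hl]; ring)]
          rw [hve m₀, if_pos rfl]; norm_num
        rw [this, Real.sqrt_one]
      rw [he1, mul_one] at hb
      exact le_trans (abs_le_enorm _ m₀) hb
    · -- off-diagonal, equal values
      rw [bracket, if_pos hmn, if_neg hmm]
      have hm₀n₀ : m₀ ≠ n₀ := by
        intro he
        apply hmm
        have h1 := hminle m hmB
        have h2 := hmaxge m hmB
        have h3 := hminle n hnB
        have h4 := hmaxge n hnB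
        rw [← he] at h2 h4
        exact le_antisymm (le_trans h2 h3) (le_trans h4 h1)
      have hm₀ltn₀ : m₀ < n₀ := lt_of_le_of_ne (le_trans (hminle m hmB) (hmaxge m hmB)) hm₀n₀
      -- build σ with σ m₀ = m, σ n₀ = n, fixing α
      set τ₁ := Equiv.swap m₀ m with hτ₁
      set n₁ := τ₁ n with hn₁
      have hn₁B : n₁ ∈ B := by
        rcases eq_or_ne n m₀ with rfl | h1
        · simpa [hn₁, hτ₁, Equiv.swap_apply_left] using hmB
        rcases eq_or_ne n m with rfl | h2
        · simpa [hn₁, hτ₁, Equiv.swap_apply_right] using hm₀B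
        · simpa [hn₁, hτ₁, Equiv.swap_apply_of_ne_of_ne h1 h2] using hnB
      have hn₁m₀ : n₁ ≠ m₀ := by
        intro he
        apply hmm
        have h1 := congrArg (⇑τ₁) he
        rw [hn₁, Equiv.swap_apply_self, hτ₁, Equiv.swap_apply_left] at h1
        exact h1.symm
      set τ₂ := Equiv.swap n₀ n₁ with hτ₂
      set σ : Equiv.Perm (Fin d) := τ₂.trans τ₁ with hσdef
      have hσm₀ : σ m₀ = m := by
        rw [hσdef, Equiv.trans_apply, hτ₂,
          Equiv.swap_apply_of_ne_of_ne hm₀n₀ (Ne.symm hn₁m₀), hτ₁,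
          Equiv.swap_apply_left]
      have hσn₀ : σ n₀ = n := by
        rw [hσdef, Equiv.trans_apply, hτ₂, Equiv.swap_apply_left, hn₁,
          Equiv.swap_apply_self]
      have hσα : α ∘ ⇑σ = α := by
        funext k
        have h2 := congrFun (hswapfix n₀ n₁ hn₀B hn₁B) k
        have h1 := congrFun (hswapfix m₀ m hm₀B hmB) (τ₂ k)
        simp only [Function.comp_apply] at h1 h2
        rw [← hτ₁] at h1
        rw [← hτ₂] at h2
        show α (τ₁ (τ₂ k)) = α k
        rw [h1, h2]
      have e1 : D (Pi.single m₀ 1) m₀ = D (Pi.single m 1) m := by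
        have h := hDs σ hσα m₀ m₀; rwa [hσm₀] at h
      have e2 : D (Pi.single m₀ 1) n₀ = D (Pi.single m 1) n := by
        have h := hDs σ hσα m₀ n₀; rwa [hσm₀, hσn₀] at h
      have hτswap := hswapfix m₀ n₀ hm₀B hn₀B
      have e3 : D (Pi.single m₀ 1) m₀ = D (Pi.single n₀ 1) n₀ := by
        have h := hDs (Equiv.swap m₀ n₀) hτswap m₀ m₀
        rwa [Equiv.swap_apply_left] at h
      have e4 : D (Pi.single m₀ 1) n₀ = D (Pi.single n₀ 1) m₀ := by
        have h := hDs (Equiv.swap m₀ n₀) hτswap m₀ n₀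
        rwa [Equiv.swap_apply_left, Equiv.swap_apply_right] at h
      set v : Fin d → ℝ := Pi.single m₀ 1 - Pi.single n₀ 1 with hv
      have hve : ∀ l : Fin d, v l = if l = m₀ then 1 else if l = n₀ then -1 else 0 := by
        intro l
        rw [hv]
        simp only [Pi.sub_apply, Pi.single_apply]
        rcases eq_or_ne l m₀ with rfl | h1
        · rw [if_pos rfl, if_pos rfl, if_neg hm₀n₀]; ring
        · rw [if_neg h1, if_neg h1]
          rcases eq_or_ne l n₀ with rfl | h2
          · rw [if_pos rfl, if_pos rfl]; ring
          · rw [if_neg h2, if_neg h2]; ring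
      have hDv : D v = D (Pi.single m₀ 1) - D (Pi.single n₀ 1) := by
        rw [hv, map_sub]
      set c : ℝ := D (Pi.single m 1) m - D (Pi.single m 1) n with hc
      have hDvm₀ : D v m₀ = c := by
        rw [hDv, Pi.sub_apply, ← e4, e1, e2, hc]
      have hDvn₀ : D v n₀ = -c := by
        rw [hDv, Pi.sub_apply, ← e3, e2, e1, hc]; ring
      obtain ⟨t₁, ht₁, hup⟩ : ∃ t₁ : ℝ, 0 < t₁ ∧ ∀ t : ℝ, 0 < t → t < t₁ →
          ∀ (l : ℕ) (hl : l + 1 < d), (⟨l+1, hl⟩ : Fin d) = m₀ →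
            α m₀ + t ≤ α ⟨l, Nat.lt_of_succ_lt hl⟩ := by
        by_cases h0 : (m₀:ℕ) = 0
        · refine ⟨1, one_pos, fun t ht _ l hl he => ?_⟩
          exfalso
          have := congrArg Fin.val he
          simp only [Fin.val_mk] at this
          omega
        · have hm₀pos : 0 < (m₀:ℕ) := Nat.pos_of_ne_zero h0
          set p : Fin d := ⟨(m₀:ℕ)-1, lt_of_le_of_lt (Nat.sub_le _ _) m₀.isLt⟩ with hp
          have hpm₀ : p < m₀ := by simp [hp, Fin.lt_def]; omega
          have hgap : α m₀ < α p := hstrict_up p hpm₀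
          refine ⟨α p - α m₀, by linarith, fun t ht ht' l hl he => ?_⟩
          have hlval := congrArg Fin.val he
          simp only [Fin.val_mk] at hlval
          have hlp : (⟨l, Nat.lt_of_succ_lt hl⟩ : Fin d) = p := by
            simp only [hp, Fin.ext_iff, Fin.val_mk]
            omega
          rw [hlp]
          linarith
      obtain ⟨t₂, ht₂, hdn⟩ : ∃ t₂ : ℝ, 0 < t₂ ∧ ∀ t : ℝ, 0 < t → t < t₂ →
          ∀ (l : ℕ) (hl : l + 1 < d), (⟨l, Nat.lt_of_succ_lt hl⟩ : Fin d) = n₀ →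
            α ⟨l+1, hl⟩ ≤ α n₀ - t := by
        by_cases hq : (n₀:ℕ) + 1 < d
        · set q : Fin d := ⟨(n₀:ℕ)+1, hq⟩ with hqd
          have hn₀q : n₀ < q := by simp [hqd, Fin.lt_def]
          have hgap : α q < α n₀ := hstrict_dn q hn₀q
          refine ⟨α n₀ - α q, by linarith, fun t ht ht' l hl he => ?_⟩
          have hlval := congrArg Fin.val he
          simp only [Fin.val_mk] at hlval
          have hlq : (⟨l+1, hl⟩ : Fin d) = q := by
            simp only [hqd, Fin.ext_iff, Fin.val_mk]
            omega
          rw [hlq]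
          linarith
        · refine ⟨1, one_pos, fun t ht _ l hl he => ?_⟩
          exfalso
          have := congrArg Fin.val he
          simp only [Fin.val_mk] at this
          omega
      obtain ⟨t₀, ht₀, hvanti⟩ : ∃ t₀ : ℝ, 0 < t₀ ∧ ∀ t : ℝ, 0 < t → t < t₀ →
          Antitone (α + t • v) := by
        refine ⟨min t₁ t₂, lt_min ht₁ ht₂, fun t ht htm => ?_⟩
        have htm1 : t < t₁ := lt_of_lt_of_le htm (min_le_left _ _)
        have htm2 : t < t₂ := lt_of_lt_of_le htm (min_le_right _ _)
        apply antitone_of_succ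
        intro l hl
        have hadj2 : α ⟨l+1, hl⟩ ≤ α ⟨l, Nat.lt_of_succ_lt hl⟩ :=
          hα (by simp [Fin.mk_le_mk])
        simp only [Pi.add_apply, Pi.smul_apply, smul_eq_mul]
        rw [hve, hve]
        by_cases hb1 : (⟨l+1, hl⟩ : Fin d) = m₀
        · have hv1 := congrArg Fin.val hb1
          simp only [Fin.val_mk] at hv1
          have hc1 : (⟨l, Nat.lt_of_succ_lt hl⟩ : Fin d) ≠ m₀ := by
            intro he
            have := congrArg Fin.val he
            simp only [Fin.val_mk] at this
            omega
          have hc2 : (⟨l, Nat.lt_of_succ_lt hl⟩ : Fin d) ≠ n₀ := by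
            intro he
            have := congrArg Fin.val he
            simp only [Fin.val_mk] at this
            have := hm₀ltn₀
            rw [Fin.lt_def] at this
            omega
          rw [if_pos hb1, if_neg hc1, if_neg hc2, hb1]
          have := hup t ht htm1 l hl hb1
          linarith
        · by_cases hb0 : (⟨l, Nat.lt_of_succ_lt hl⟩ : Fin d) = n₀
          · have hc1 : (⟨l, Nat.lt_of_succ_lt hl⟩ : Fin d) ≠ m₀ := by
              rw [hb0]; exact Ne.symm hm₀n₀
            have hc2 : (⟨l+1, hl⟩ : Fin d) ≠ n₀ := by
              intro he
              have h1 := congrArg Fin.val he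
              have h2 := congrArg Fin.val hb0
              simp only [Fin.val_mk] at h1 h2
              omega
            rw [if_neg hb1, if_neg hc2, if_neg hc1, if_pos hb0, hb0]
            have := hdn t ht htm2 l hl hb0
            linarith
          · rw [if_neg hb1, if_neg hb0]
            by_cases ha2 : (⟨l+1, hl⟩ : Fin d) = n₀
            · rw [if_pos ha2]
              by_cases hbm : (⟨l, Nat.lt_of_succ_lt hl⟩ : Fin d) = m₀
              · rw [if_pos hbm]; nlinarith
              · rw [if_neg hbm]; nlinarith
            · rw [if_neg ha2]
              by_cases hbm : (⟨l, Nat.lt_of_succ_lt hl⟩ : Fin d) = m₀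
              · rw [if_pos hbm]; nlinarith
              · rw [if_neg hbm]; nlinarith
      have hb := deriv_bound Fext F α D K hα hLip hFeq hD v t₀ ht₀ hvanti
      have he2 : euclidEnorm v = Real.sqrt 2 := by
        unfold euclidEnorm
        congr 1
        rw [sum_pair_support (fun l => (v l)^2) hm₀n₀
          (fun l h1 h2 => by show v l ^ 2 = 0; rw [hve l, if_neg h1, if_neg h2]; ring)]
        rw [hve m₀, hve n₀, if_pos rfl, if_neg (Ne.symm hm₀n₀), if_pos rfl]
        norm_num
      rw [he2] at hb
      have h2c : |D v m₀ - D v n₀| ≤ Real.sqrt 2 * euclidEnorm (D v) :=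
        abs_sub_le_enorm _ hm₀n₀
      have hs2 : Real.sqrt 2 * Real.sqrt 2 = 2 := Real.mul_self_sqrt (by norm_num)
      have hchain : |2 * c| ≤ 2 * K := by
        have : D v m₀ - D v n₀ = 2 * c := by rw [hDvm₀, hDvn₀]; ring
        rw [this] at h2c
        calc |2 * c| ≤ Real.sqrt 2 * euclidEnorm (D v) := h2c
          _ ≤ Real.sqrt 2 * (K * Real.sqrt 2) :=
              mul_le_mul_of_nonneg_left hb (Real.sqrt_nonneg 2)
          _ = Real.sqrt 2 * Real.sqrt 2 * K := by ring
          _ = 2 * K := by rw [hs2]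
      rw [abs_mul] at hchain
      simp only [abs_two] at hchain
      linarith [hchain]
  · -- distinct values : divided difference
    rw [bracket, if_neg hmn]
    rw [abs_div]
    rw [div_le_iff₀ (abs_pos.mpr (sub_ne_zero.mpr hmn))]
    exact habs m n
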